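/- arXiv:2105.14694 — 4 statements merged into one kernel-verified Lean document; each statement's English description precedes it below -/
import Mathlib

section
/- Let g_1,…,g_n be nonzero vectors in ℝ^d, Z = ∑_{i=1}^n ‖g_i‖₂, and m = (1/n)∑_{i=1}^n g_i. Define the SGD covariance Σ¹ = (1/n)∑_{i=1}^n g_i g_iᵀ − m mᵀ and the RR covariance Σ² = (Z/n²)∑_{i=1}^n g_i g_iᵀ/‖g_i‖₂ − m mᵀ. Then Tr(Σ²) = (1/n² )(∑_{i=1}^n ‖g_i‖₂)² − ‖m‖₂² ≤ (1/n)∑_{i=1}^n ‖g_i‖₂² − ‖m‖₂² = Tr(Σ¹); i.e. the trace of the RR covariance is at most the trace of the SGD covariance. -/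
open Matrix

lemma trace_vecMulVec_self {d : ℕ} (v : EuclideanSpace ℝ (Fin d)) :
    (vecMulVec v v).trace = ‖v‖ ^ 2 := by
  rw [← real_inner_self_eq_norm_sq]
  simp [Matrix.trace, vecMulVec, Matrix.diag, PiLp.inner_apply, mul_comm]
  rw [EuclideanSpace.real_norm_sq_eq]; simp [sq]

/-- the trace of the RR covariance matrix is at most the trace of the
SGD covariance matrix: with `Σ¹ = (1/n)∑ g i g iᵀ − m mᵀ` and
`Σ² = (Z/n²)∑ g i g iᵀ/‖g i‖ − m mᵀ`, we have
`Tr(Σ²) = (1/n²)(∑ ‖g i‖)² − ‖m‖² ≤ (1/n)∑ ‖g i‖² − ‖m‖² = Tr(Σ¹)`. -/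
theorem rr_covariance_trace_le_sgd {d n : ℕ} (hn : 0 < n)
    (g : Fin n → EuclideanSpace ℝ (Fin d)) (hg : ∀ i, g i ≠ 0)
    (Z : ℝ) (m : EuclideanSpace ℝ (Fin d))
    (hZ : Z = ∑ i, ‖g i‖) (hm : m = (1 / (n : ℝ)) • ∑ i, g i)
    (Sigma1 Sigma2 : Matrix (Fin d) (Fin d) ℝ)
    (hSigma1 : Sigma1 = (1 / (n : ℝ)) • ∑ i, vecMulVec (g i) (g i) - vecMulVec m m)
    (hSigma2 : Sigma2 = (Z / (n : ℝ) ^ 2) •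
        ∑ i, (‖g i‖)⁻¹ • vecMulVec (g i) (g i) - vecMulVec m m) :
    Sigma2.trace = (1 / (n : ℝ) ^ 2) * (∑ i, ‖g i‖) ^ 2 - ‖m‖ ^ 2 ∧
    (1 / (n : ℝ) ^ 2) * (∑ i, ‖g i‖) ^ 2 - ‖m‖ ^ 2 ≤
      (1 / (n : ℝ)) * ∑ i, ‖g i‖ ^ 2 - ‖m‖ ^ 2 ∧
    Sigma1.trace = (1 / (n : ℝ)) * ∑ i, ‖g i‖ ^ 2 - ‖m‖ ^ 2 ∧
    Sigma2.trace ≤ Sigma1.trace := by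
  have key : ∀ i : Fin n, (‖g i‖)⁻¹ * ‖g i‖ ^ 2 = ‖g i‖ := by
    intro i
    rw [sq]
    field_simp
  have h2 : Sigma2.trace = (1 / (n : ℝ) ^ 2) * (∑ i, ‖g i‖) ^ 2 - ‖m‖ ^ 2 := by
    rw [hSigma2, trace_sub, trace_smul, trace_sum]
    simp only [trace_smul, smul_eq_mul, trace_vecMulVec_self]
    rw [Finset.sum_congr rfl fun i _ => key i, hZ]
    ring
  have h1 : Sigma1.trace = (1 / (n : ℝ)) * ∑ i, ‖g i‖ ^ 2 - ‖m‖ ^ 2 := by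
    simp only [hSigma1, trace_sub, trace_smul, trace_sum, smul_eq_mul,
      trace_vecMulVec_self]
  have hineq : (1 / (n : ℝ) ^ 2) * (∑ i, ‖g i‖) ^ 2 - ‖m‖ ^ 2 ≤
      (1 / (n : ℝ)) * ∑ i, ‖g i‖ ^ 2 - ‖m‖ ^ 2 := by
    have hcs : (∑ i, ‖g i‖) ^ 2 ≤ (n : ℝ) * ∑ i, ‖g i‖ ^ 2 := by
      simpa using sq_sum_le_card_mul_sum_sq (s := Finset.univ) (f := fun i => ‖g i‖)
    have hn' : (0:ℝ) < n := by exact_mod_cast hn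
    have h := mul_le_mul_of_nonneg_left hcs (by positivity : (0:ℝ) ≤ 1/(n:ℝ)^2)
    have heq : (1/(n:ℝ)^2) * ((n:ℝ) * ∑ i, ‖g i‖^2) = (1/(n:ℝ)) * ∑ i, ‖g i‖^2 := by
      field_simp
    linarith
  exact ⟨h2, hineq, h1, by rw [h1, h2]; exact hineq⟩
end

section
/- Let α, γ > 0, p ∈ (1/2, 1), m ≥ 0, σ² ≥ 0, and let (a_k)_{k≥1} be a sequence of nonnegative real numbers satisfying a_{k+1} ≤ (1 − 2αγ/(k+m)^p) a_k + γ²σ²/(k+m)^{2p} for all k large enough that 2αγ/(k+m)^p < 1. Then limsup_{k→∞} k^p·a_k ≤ γσ²/(2α); in particular a_k ≤ γσ²/(2α k^p) + o(1/k^p). -/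
open Filter Asymptotics

/-- One recursion step pushes below the moving threshold. -/
lemma step_aux (α γ σ2 ε p c x A A' : ℝ) (hα : 0 < α) (hγ : 0 < γ) (hσ2 : 0 ≤ σ2)
    (hε : 0 < ε) (hp2 : p ≤ 1) (hx1 : 1 ≤ x)
    (hc : 2 * α * γ * c = γ ^ 2 * σ2 + α * γ * ε)
    (hiii : c ≤ α * γ * ε * x ^ (1 - p))
    (hrec : A' ≤ (1 - 2 * α * γ / x ^ p) * A + γ ^ 2 * σ2 / x ^ (2 * p)) :
    A' - c / (x + 1) ^ p ≤ (1 - 2 * α * γ / x ^ p) * (A - c / x ^ p) := by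
  have hx0 : (0:ℝ) < x := lt_of_lt_of_le one_pos hx1
  have hxx : (0:ℝ) < x + 1 := by linarith
  have hxp : (0:ℝ) < x ^ p := Real.rpow_pos_of_pos hx0 p
  have hx2p : (0:ℝ) < x ^ (2*p) := Real.rpow_pos_of_pos hx0 _
  have hx1p : (0:ℝ) < x ^ (1+p) := Real.rpow_pos_of_pos hx0 _
  have hxp1 : (0:ℝ) < (x+1) ^ p := Real.rpow_pos_of_pos hxx p
  have hc0 : 0 ≤ c := by
    nlinarith [hc, mul_pos hα (mul_pos hγ hε), mul_nonneg (sq_nonneg γ) hσ2,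
      show (0:ℝ) < 2*α*γ by positivity]
  have e1 : x ^ (2*p) = x ^ p * x ^ p := by rw [two_mul, Real.rpow_add hx0]
  have e2 : x ^ (1+p) = x * x ^ p := by rw [Real.rpow_add hx0, Real.rpow_one]
  -- (x+1)^p ≤ x^p*(x+1)/x
  have hA : (x+1) ^ p ≤ x ^ p * (x+1) / x := by
    have hrw : x + 1 = x * (1 + 1/x) := by field_simp
    rw [hrw, Real.mul_rpow hx0.le (by positivity)]
    have h2 : (1 + 1/x) ^ p ≤ (1 + 1/x) ^ (1:ℝ) :=
      Real.rpow_le_rpow_of_exponent_le (by nlinarith [one_div_pos.mpr hx0]) hp2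
    rw [Real.rpow_one] at h2
    calc x ^ p * (1 + 1/x) ^ p ≤ x ^ p * (1 + 1/x) :=
          mul_le_mul_of_nonneg_left h2 hxp.le
      _ = x ^ p * (x * (1 + 1/x)) / x := by field_simp
  -- h1 : 1/x^p - 1/(x+1)^p ≤ 1/x^(1+p)
  have h1 : 1 / x ^ p - 1 / (x+1) ^ p ≤ 1 / x ^ (1+p) := by
    have key1 : 1 / x ^ p - 1 / x ^ (1+p) ≤ 1 / (x+1) ^ p := by
      have h'' : 1 / x ^ p - 1 / x ^ (1+p) = (x - 1) / (x * x ^ p) := by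
        rw [e2]; field_simp
      rw [h'']
      have s1 : (x - 1) / (x * x ^ p) ≤ x / ((x+1) * x ^ p) := by
        rw [div_le_div_iff₀ (by positivity) (by positivity)]
        nlinarith [hxp]
      have s2 : x / ((x+1) * x ^ p) ≤ 1 / (x+1) ^ p := by
        rw [div_le_div_iff₀ (by positivity) hxp1]
        have h3 := mul_le_mul_of_nonneg_left hA hx0.le
        calc x * (x+1) ^ p ≤ x * (x ^ p * (x+1) / x) := h3
          _ = 1 * ((x+1) * x ^ p) := by field_simp
      linarith
    linarith
  have f3 : c / x ^ p - c / (x+1) ^ p ≤ c / x ^ (1+p) := by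
    have h := mul_le_mul_of_nonneg_left h1 hc0
    rw [mul_sub, mul_one_div, mul_one_div, mul_one_div] at h
    exact h
  have f4 : c / x ^ (1+p) ≤ α * γ * ε / x ^ (2*p) := by
    rw [div_le_div_iff₀ hx1p hx2p]
    have e3 : x ^ (1-p) * x ^ (2*p) = x ^ (1+p) := by
      rw [← Real.rpow_add hx0]; ring_nf
    calc c * x ^ (2*p) ≤ α * γ * ε * x ^ (1-p) * x ^ (2*p) :=
          mul_le_mul_of_nonneg_right hiii hx2p.le
      _ = α * γ * ε * x ^ (1+p) := by rw [mul_assoc, e3]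
  have f2 : (2 * α * γ / x ^ p) * (c / x ^ p) =
      γ ^ 2 * σ2 / x ^ (2*p) + α * γ * ε / x ^ (2*p) := by
    calc (2 * α * γ / x ^ p) * (c / x ^ p) = (2 * α * γ * c) / (x ^ p * x ^ p) :=
          div_mul_div_comm _ _ _ _
      _ = (γ ^ 2 * σ2 + α * γ * ε) / x ^ (2*p) := by rw [hc, ← e1]
      _ = _ := add_div _ _ _
  have fexp : (1 - 2 * α * γ / x ^ p) * (A - c / x ^ p) =
      (1 - 2 * α * γ / x ^ p) * A - c / x ^ p + (2 * α * γ / x ^ p) * (c / x ^ p) := by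
    ring
  linarith [hrec, f2, f3, f4, fexp]

/-- Tail term tends to zero. -/
lemma aux_tendsto (M b p mR C : ℝ) (hM : 0 ≤ M) (hb : 0 < b) (hp0 : 0 < p) (hp1 : p < 1)
    (hm : 0 ≤ mR) :
    Tendsto (fun k : ℕ => (k:ℝ) ^ p * (M * Real.exp (-(b * (((k:ℝ) - C) / ((k:ℝ) + mR) ^ p)))))
      atTop (nhds 0) := by
  have h1p : (0:ℝ) < 1 - p := by linarith
  have hg : Tendsto (fun k : ℕ => M * ((k:ℝ) ^ p * Real.exp (-(b/4) * (k:ℝ) ^ (1-p))))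
      atTop (nhds 0) := by
    have hcomp : Tendsto (fun k : ℕ => (k:ℝ) ^ (1-p)) atTop atTop :=
      (tendsto_rpow_atTop h1p).comp tendsto_natCast_atTop_atTop
    have h0 := (tendsto_rpow_mul_exp_neg_mul_atTop_nhds_zero (p/(1-p)) (b/4)
      (by positivity)).comp hcomp
    have hcongr : ∀ᶠ k : ℕ in atTop,
        (((k:ℝ) ^ (1-p)) ^ (p/(1-p)) * Real.exp (-(b/4) * (k:ℝ) ^ (1-p))) =
        (k:ℝ) ^ p * Real.exp (-(b/4) * (k:ℝ) ^ (1-p)) := by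
      filter_upwards [eventually_ge_atTop 1] with k hk
      congr 1
      rw [← Real.rpow_mul (by positivity)]
      congr 1
      field_simp
    have h0' := (tendsto_congr' hcongr).mp h0
    simpa using h0'.const_mul M
  refine squeeze_zero' ?_ ?_ hg
  · filter_upwards with k
    positivity
  · have hev : ∀ᶠ k : ℕ in atTop, 2*C ≤ (k:ℝ) ∧ mR ≤ (k:ℝ) ∧ 1 ≤ (k:ℝ) := by
      have e1 := tendsto_natCast_atTop_atTop (R := ℝ)
      exact ((e1.eventually_ge_atTop (2*C)).and
        ((e1.eventually_ge_atTop mR).and (e1.eventually_ge_atTop 1)))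
    filter_upwards [hev] with k hk
    obtain ⟨hC, hmk, h1k⟩ := hk
    have hk0 : (0:ℝ) < (k:ℝ) := by linarith
    have hkp : (0:ℝ) < (k:ℝ) ^ p := Real.rpow_pos_of_pos hk0 p
    have hden : (0:ℝ) < ((k:ℝ) + mR) ^ p := Real.rpow_pos_of_pos (by linarith) p
    have hub : ((k:ℝ) + mR) ^ p ≤ 2 * (k:ℝ) ^ p := by
      calc ((k:ℝ) + mR) ^ p ≤ (2*(k:ℝ)) ^ p :=
            Real.rpow_le_rpow (by linarith) (by linarith) hp0.le
        _ = (2:ℝ) ^ p * (k:ℝ) ^ p := Real.mul_rpow (by norm_num) hk0.le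
        _ ≤ 2 * (k:ℝ) ^ p := by
            have h2p : (2:ℝ) ^ p ≤ (2:ℝ) ^ (1:ℝ) :=
              Real.rpow_le_rpow_of_exponent_le one_le_two hp1.le
            rw [Real.rpow_one] at h2p
            exact mul_le_mul_of_nonneg_right h2p hkp.le
    have hq : ((k:ℝ)/2) / (2*(k:ℝ) ^ p) ≤ ((k:ℝ) - C) / ((k:ℝ) + mR) ^ p :=
      div_le_div₀ (by linarith) (by linarith) hden hub
    have heq : ((k:ℝ)/2) / (2*(k:ℝ) ^ p) = (k:ℝ) ^ (1-p) / 4 := by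
      rw [Real.rpow_sub hk0, Real.rpow_one, div_div, div_div]
      congr 1
      ring
    have hexp : Real.exp (-(b * (((k:ℝ) - C) / ((k:ℝ) + mR) ^ p))) ≤
        Real.exp (-(b/4) * (k:ℝ) ^ (1-p)) := by
      rw [Real.exp_le_exp]
      rw [heq] at hq
      nlinarith [hq, hb.le]
    calc (k:ℝ) ^ p * (M * Real.exp (-(b * (((k:ℝ) - C) / ((k:ℝ) + mR) ^ p))))
        ≤ (k:ℝ) ^ p * (M * Real.exp (-(b/4) * (k:ℝ) ^ (1-p))) := by
          apply mul_le_mul_of_nonneg_left _ hkp.le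
          exact mul_le_mul_of_nonneg_left hexp hM
      _ = M * ((k:ℝ) ^ p * Real.exp (-(b/4) * (k:ℝ) ^ (1-p))) := by ring

theorem recursion_rate_p_lt_one (α γ m σ2 p : ℝ) (hα : 0 < α) (hγ : 0 < γ)
    (hp : p ∈ Set.Ioo (1 / 2 : ℝ) 1) (hm : 0 ≤ m) (hσ2 : 0 ≤ σ2)
    (a : ℕ → ℝ) (ha : ∀ k, 0 ≤ a k)
    (hrec : ∀ k : ℕ, 2 * α * γ / ((k : ℝ) + m) ^ p < 1 →
      a (k + 1) ≤ (1 - 2 * α * γ / ((k : ℝ) + m) ^ p) * a k +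
        γ ^ 2 * σ2 / ((k : ℝ) + m) ^ (2 * p)) :
    limsup (fun k : ℕ => (k : ℝ) ^ p * a k) atTop ≤ γ * σ2 / (2 * α) ∧
    ∃ e : ℕ → ℝ, (e =o[atTop] fun k : ℕ => 1 / (k : ℝ) ^ p) ∧
      ∀ k : ℕ, 1 ≤ k → a k ≤ γ * σ2 / (2 * α * (k : ℝ) ^ p) + e k := by
  obtain ⟨hp1, hp2⟩ := hp
  have hp0 : (0:ℝ) < p := by linarith
  set L : ℝ := γ * σ2 / (2 * α) with hL
  have hL0 : 0 ≤ L := by positivity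
  -- KEY eventual bound
  have key : ∀ ε : ℝ, 0 < ε → ∀ᶠ k : ℕ in atTop, (k:ℝ) ^ p * a k ≤ L + ε := by
    intro ε hε
    set c : ℝ := L + ε/2 with hcdef
    have hc0 : 0 ≤ c := by positivity
    have hcrel : 2 * α * γ * c = γ ^ 2 * σ2 + α * γ * ε := by
      rw [hcdef, hL]
      field_simp
    -- choose K
    have htm : Tendsto (fun k : ℕ => (k:ℝ) + m) atTop atTop :=
      tendsto_atTop_add_const_right atTop m tendsto_natCast_atTop_atTop
    have htp : Tendsto (fun k : ℕ => ((k:ℝ) + m) ^ p) atTop atTop :=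
      (tendsto_rpow_atTop hp0).comp htm
    have ht1p : Tendsto (fun k : ℕ => α * γ * ε * ((k:ℝ) + m) ^ (1-p)) atTop atTop := by
      apply Tendsto.const_mul_atTop (by positivity)
      exact (tendsto_rpow_atTop (by linarith)).comp htm
    have hev : ∀ᶠ k : ℕ in atTop,
        1 ≤ k ∧ 2 * α * γ < ((k:ℝ) + m) ^ p ∧ c ≤ α * γ * ε * ((k:ℝ) + m) ^ (1-p) :=
      (eventually_ge_atTop 1).and ((htp.eventually_gt_atTop (2*α*γ)).and
        (ht1p.eventually_ge_atTop c))
    obtain ⟨K, hK⟩ := eventually_atTop.mp hev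
    have hK1 : 1 ≤ K := (hK K le_rfl).1
    -- basic positivity at index k ≥ K
    have hx1 : ∀ k : ℕ, K ≤ k → (1:ℝ) ≤ (k:ℝ) + m := by
      intro k hk
      have : (1:ℕ) ≤ k := le_trans hK1 hk
      have : (1:ℝ) ≤ (k:ℝ) := by exact_mod_cast this
      linarith
    -- one-step inequality
    have hstep : ∀ k : ℕ, K ≤ k →
        a (k+1) - c / (((k+1:ℕ):ℝ) + m) ^ p ≤
          (1 - 2 * α * γ / ((k:ℝ) + m) ^ p) * (a k - c / ((k:ℝ) + m) ^ p) := by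
      intro k hk
      obtain ⟨-, hii, hiii⟩ := hK k hk
      have hx := hx1 k hk
      have hxp : (0:ℝ) < ((k:ℝ)+m) ^ p := Real.rpow_pos_of_pos (by linarith) p
      have hcast : ((k+1:ℕ):ℝ) + m = ((k:ℝ) + m) + 1 := by push_cast; ring
      rw [hcast]
      exact step_aux α γ σ2 ε p c ((k:ℝ)+m) (a k) (a (k+1)) hα hγ hσ2 hε hp2.le hx
        hcrel hiii (hrec k (by rw [div_lt_one hxp]; exact hii))
    -- induction: product bound
    set M : ℝ := max (a K - c / ((K:ℝ) + m) ^ p) 0 with hMdef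
    have hM0 : 0 ≤ M := le_max_right _ _
    have hηlt : ∀ k : ℕ, K ≤ k → 0 < 1 - 2 * α * γ / ((k:ℝ) + m) ^ p := by
      intro k hk
      obtain ⟨-, hii, -⟩ := hK k hk
      have hxp : (0:ℝ) < ((k:ℝ)+m) ^ p := Real.rpow_pos_of_pos (by linarith [hx1 k hk]) p
      have : 2 * α * γ / ((k:ℝ) + m) ^ p < 1 := by rw [div_lt_one hxp]; exact hii
      linarith
    have ind : ∀ n : ℕ, a (K+n) - c / (((K+n:ℕ):ℝ) + m) ^ p ≤
        M * ∏ j ∈ Finset.range n, (1 - 2 * α * γ / (((K+j:ℕ):ℝ) + m) ^ p) := by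
      intro n
      induction n with
      | zero =>
        simp only [Finset.range_zero, Finset.prod_empty, mul_one, Nat.add_zero]
        rw [hMdef]
        exact le_max_left _ 0
      | succ n ih =>
        rw [Finset.prod_range_succ, ← mul_assoc]
        have hpos := hηlt (K+n) (Nat.le_add_right K n)
        calc a (K+n+1) - c / (((K+n+1:ℕ):ℝ) + m) ^ p
            ≤ (1 - 2 * α * γ / (((K+n:ℕ):ℝ) + m) ^ p) *
              (a (K+n) - c / (((K+n:ℕ):ℝ) + m) ^ p) := hstep (K+n) (Nat.le_add_right K n)
          _ ≤ (1 - 2 * α * γ / (((K+n:ℕ):ℝ) + m) ^ p) *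
              (M * ∏ j ∈ Finset.range n, (1 - 2 * α * γ / (((K+j:ℕ):ℝ) + m) ^ p)) :=
              mul_le_mul_of_nonneg_left ih hpos.le
          _ = M * (∏ j ∈ Finset.range n, (1 - 2 * α * γ / (((K+j:ℕ):ℝ) + m) ^ p)) *
              (1 - 2 * α * γ / (((K+n:ℕ):ℝ) + m) ^ p) := by ring
    -- product ≤ exponential
    have prodle : ∀ n : ℕ,
        (∏ j ∈ Finset.range n, (1 - 2 * α * γ / (((K+j:ℕ):ℝ) + m) ^ p)) ≤
          Real.exp (-(2 * α * γ * ((n:ℝ) / (((K+n:ℕ):ℝ) + m) ^ p))) := by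
      intro n
      have step1 : (∏ j ∈ Finset.range n, (1 - 2 * α * γ / (((K+j:ℕ):ℝ) + m) ^ p)) ≤
          ∏ j ∈ Finset.range n, Real.exp (-(2 * α * γ / (((K+j:ℕ):ℝ) + m) ^ p)) := by
        apply Finset.prod_le_prod
        · intro j _
          exact (hηlt (K+j) (Nat.le_add_right K j)).le
        · intro j _
          have := Real.add_one_le_exp (-(2 * α * γ / (((K+j:ℕ):ℝ) + m) ^ p))
          linarith
      rw [← Real.exp_sum] at step1
      refine le_trans step1 ?_
      rw [Real.exp_le_exp]
      have hterm : ∀ j ∈ Finset.range n,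
          2 * α * γ / (((K+n:ℕ):ℝ) + m) ^ p ≤ 2 * α * γ / (((K+j:ℕ):ℝ) + m) ^ p := by
        intro j hj
        have hj' : (j:ℝ) ≤ (n:ℝ) := by
          exact_mod_cast (Finset.mem_range.mp hj).le
        have hb1 : (1:ℝ) ≤ ((K+j:ℕ):ℝ) + m := hx1 (K+j) (Nat.le_add_right K j)
        have hmono : (((K+j:ℕ):ℝ) + m) ^ p ≤ (((K+n:ℕ):ℝ) + m) ^ p := by
          apply Real.rpow_le_rpow (by linarith) _ hp0.le
          push_cast
          linarith
        exact div_le_div_of_nonneg_left (by positivity)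
          (Real.rpow_pos_of_pos (by linarith) p) hmono
      have hsum := Finset.sum_le_sum hterm
      rw [Finset.sum_const, Finset.card_range] at hsum
      have : (n:ℝ) * (2 * α * γ / (((K+n:ℕ):ℝ) + m) ^ p) ≤
          ∑ j ∈ Finset.range n, 2 * α * γ / (((K+j:ℕ):ℝ) + m) ^ p := by
        simpa [nsmul_eq_mul] using hsum
      calc ∑ x ∈ Finset.range n, -(2 * α * γ / (((K+x:ℕ):ℝ) + m) ^ p)
          = -∑ x ∈ Finset.range n, (2 * α * γ / (((K+x:ℕ):ℝ) + m) ^ p) := by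
            rw [Finset.sum_neg_distrib]
        _ ≤ -((n:ℝ) * (2 * α * γ / (((K+n:ℕ):ℝ) + m) ^ p)) := neg_le_neg this
        _ = -(2 * α * γ * ((n:ℝ) / (((K+n:ℕ):ℝ) + m) ^ p)) := by ring
    -- bound for k ≥ K
    have main_bound : ∀ k : ℕ, K ≤ k → a k ≤ c / ((k:ℝ) + m) ^ p +
        M * Real.exp (-(2 * α * γ * (((k:ℝ) - (K:ℝ)) / ((k:ℝ) + m) ^ p))) := by
      intro k hk
      obtain ⟨n, rfl⟩ := Nat.exists_eq_add_of_le hk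
      have h1 := ind n
      have h2 := prodle n
      have h3 : M * (∏ j ∈ Finset.range n, (1 - 2 * α * γ / (((K+j:ℕ):ℝ) + m) ^ p)) ≤
          M * Real.exp (-(2 * α * γ * ((n:ℝ) / (((K+n:ℕ):ℝ) + m) ^ p))) :=
        mul_le_mul_of_nonneg_left h2 hM0
      have hcast : ((K+n:ℕ):ℝ) - (K:ℝ) = (n:ℝ) := by push_cast; ring
      rw [hcast]
      linarith
    -- tail tends to 0
    have htail := aux_tendsto M (2*α*γ) p m (K:ℝ) hM0 (by positivity) hp0 hp2 hm
    have htail2 : ∀ᶠ k : ℕ in atTop,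
        (k:ℝ) ^ p * (M * Real.exp (-(2*α*γ * (((k:ℝ) - (K:ℝ)) / ((k:ℝ) + m) ^ p)))) < ε/2 :=
      htail.eventually_lt_const (by positivity)
    filter_upwards [htail2, eventually_ge_atTop K, eventually_ge_atTop 1] with k ht hkK hk1
    have hk1R : (1:ℝ) ≤ (k:ℝ) := by exact_mod_cast hk1
    have hxp : (0:ℝ) < ((k:ℝ)+m) ^ p := Real.rpow_pos_of_pos (by linarith) p
    have hkp : (0:ℝ) ≤ (k:ℝ) ^ p := Real.rpow_nonneg (by linarith) p
    have hfirst : (k:ℝ) ^ p * (c / ((k:ℝ) + m) ^ p) ≤ c := by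
      have hle : (k:ℝ) ^ p ≤ ((k:ℝ)+m) ^ p :=
        Real.rpow_le_rpow (by linarith) (by linarith) hp0.le
      have : (k:ℝ) ^ p / ((k:ℝ)+m) ^ p ≤ 1 := by
        rw [div_le_one hxp]; exact hle
      calc (k:ℝ) ^ p * (c / ((k:ℝ) + m) ^ p) = c * ((k:ℝ) ^ p / ((k:ℝ)+m) ^ p) := by ring
        _ ≤ c * 1 := mul_le_mul_of_nonneg_left this hc0
        _ = c := mul_one c
    have hmb := main_bound k hkK
    calc (k:ℝ) ^ p * a k ≤ (k:ℝ) ^ p * (c / ((k:ℝ) + m) ^ p +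
          M * Real.exp (-(2 * α * γ * (((k:ℝ) - (K:ℝ)) / ((k:ℝ) + m) ^ p)))) :=
        mul_le_mul_of_nonneg_left hmb hkp
      _ = (k:ℝ) ^ p * (c / ((k:ℝ) + m) ^ p) +
          (k:ℝ) ^ p * (M * Real.exp (-(2*α*γ * (((k:ℝ) - (K:ℝ)) / ((k:ℝ) + m) ^ p)))) := by
          ring
      _ ≤ c + ε/2 := by linarith
      _ = L + ε := by rw [hcdef]; ring
  constructor
  · -- limsup part
    apply le_of_forall_pos_le_add
    intro ε hε
    apply limsup_le_of_le
    · exact isCoboundedUnder_le_of_le atTop (x := 0)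
        fun k => mul_nonneg (Real.rpow_nonneg (Nat.cast_nonneg k) p) (ha k)
    · exact key ε hε
  · -- little-o part
    refine ⟨fun k => max (a k - γ * σ2 / (2 * α * (k:ℝ) ^ p)) 0, ?_, ?_⟩
    · have hg0 : ∀ᶠ k : ℕ in atTop, (1 / (k:ℝ) ^ p) = 0 →
          (max (a k - γ * σ2 / (2 * α * (k:ℝ) ^ p)) 0 : ℝ) = 0 := by
        filter_upwards [eventually_ge_atTop 1] with k hk h0
        exfalso
        have hk1R : (1:ℝ) ≤ (k:ℝ) := by exact_mod_cast hk
        have : (0:ℝ) < (k:ℝ) ^ p := Real.rpow_pos_of_pos (by linarith) p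
        rw [one_div, inv_eq_zero] at h0
        linarith [h0 ▸ this]
      rw [isLittleO_iff_tendsto' hg0]
      have hcongr : ∀ᶠ k : ℕ in atTop,
          (max (a k - γ * σ2 / (2 * α * (k:ℝ) ^ p)) 0) / (1 / (k:ℝ) ^ p) =
          max ((k:ℝ) ^ p * a k - L) 0 := by
        filter_upwards [eventually_ge_atTop 1] with k hk
        have hk1R : (1:ℝ) ≤ (k:ℝ) := by exact_mod_cast hk
        have hkp : (0:ℝ) < (k:ℝ) ^ p := Real.rpow_pos_of_pos (by linarith) p
        rw [div_eq_mul_inv, one_div, inv_inv]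
        rw [max_mul_of_nonneg _ _ hkp.le]
        congr 1
        · rw [sub_mul]
          congr 1
          · ring
          · rw [hL]
            field_simp
        · exact zero_mul _
      rw [tendsto_congr' hcongr]
      rw [NormedAddCommGroup.tendsto_nhds_zero]
      intro ε hε
      filter_upwards [key (ε/2) (by positivity)] with k hk
      have h1 : max ((k:ℝ) ^ p * a k - L) 0 ≤ ε/2 := by
        apply max_le (by linarith) (by positivity)
      have h2 : (0:ℝ) ≤ max ((k:ℝ) ^ p * a k - L) 0 := le_max_right _ _
      rw [Real.norm_eq_abs, abs_of_nonneg h2]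
      linarith
    · intro k hk
      have := le_max_left (a k - γ * σ2 / (2 * α * (k:ℝ) ^ p)) 0
      linarith
end

section
/- Let H_1,…,H_n be symmetric positive semidefinite matrices in ℝ^{d×d}, H = (1/n)∑_{i=1}^n H_i, and let v ∈ ℝ^d be such that H_i v ≠ 0 for all i. Define sampling probabilities p_i = ‖H_i v‖₂ / (∑_{j=1}^n ‖H_j v‖₂) and weights G̃_i = ((1/n)∑_{j=1}^n ‖H_j v‖₂)/‖H_i v‖₂. Then for every η > 0, the second moment of the linearized RR update satisfies ∑_{i=1}^n p_i ‖(I − η G̃_i H_i)v‖₂² = vᵀ(I − ηH)² v + η²( ((1/n)∑_{i=1}^n ‖H_i v‖₂)² − ‖Hv‖₂² ). In particular, ∑_{i=1}^n p_i G̃_i H_i v = Hv, so the linearized RR step has the same mean as the linearized SGD step. -/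
open Matrix

/-- Reinterpret a plain vector `Fin d → ℝ` as an element of `EuclideanSpace ℝ (Fin d)`,
so that `‖·‖` denotes the Euclidean (ℓ²) norm. -/
noncomputable def toEucl {d : ℕ} (x : Fin d → ℝ) : EuclideanSpace ℝ (Fin d) :=
  (WithLp.equiv 2 (Fin d → ℝ)).symm x

lemma norm_toEucl_sq {d : ℕ} (x : Fin d → ℝ) : ‖toEucl x‖ ^ 2 = x ⬝ᵥ x := by
  rw [toEucl, EuclideanSpace.norm_eq, Real.sq_sqrt (by positivity)]
  simp [dotProduct, Real.norm_eq_abs, sq_abs, sq]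

lemma toEucl_ne_zero {d : ℕ} {x : Fin d → ℝ} (hx : x ≠ 0) : toEucl x ≠ 0 := by
  intro h
  apply hx
  have := congrArg (WithLp.equiv 2 (Fin d → ℝ)) h
  simpa [toEucl] using this

lemma dotProduct_sum' {d n : ℕ} (v : Fin d → ℝ) (w : Fin n → Fin d → ℝ) :
    v ⬝ᵥ (∑ i, w i) = ∑ i, v ⬝ᵥ w i := by
  simp only [dotProduct, Finset.sum_apply, Finset.mul_sum]
  rw [Finset.sum_comm]

lemma sum_mulVec' {d n : ℕ} (M : Fin n → Matrix (Fin d) (Fin d) ℝ) (v : Fin d → ℝ) :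
    (∑ i, M i) *ᵥ v = ∑ i, M i *ᵥ v := by
  ext j
  simp only [Matrix.mulVec, dotProduct, Matrix.sum_apply, Finset.sum_apply, Finset.sum_mul]
  rw [Finset.sum_comm]

/-- second moment of the linearized RR update. With sampling
probabilities `p i = ‖H i v‖/∑ j ‖H j v‖` and weights
`G̃ i = ((1/n)∑ j ‖H j v‖)/‖H i v‖`,
`∑ i p i ‖(I − η G̃ i H i)v‖² = vᵀ(I − ηH)²v + η²(((1/n)∑ ‖H i v‖)² − ‖Hv‖²)`,
and in particular the linearized RR step is unbiased: `∑ i p i G̃ i H i v = Hv`. -/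
theorem rr_linearized_second_moment {d n : ℕ} (hn : 0 < n)
    (H : Fin n → Matrix (Fin d) (Fin d) ℝ)
    (hsymm : ∀ i, (H i).IsSymm) (hpsd : ∀ i, (H i).PosSemidef)
    (Hbar : Matrix (Fin d) (Fin d) ℝ) (hHbar : Hbar = (1 / (n : ℝ)) • ∑ i, H i)
    (v : EuclideanSpace ℝ (Fin d)) (hv : ∀ i, H i *ᵥ v ≠ 0)
    (p G : Fin n → ℝ)
    (hp : ∀ i, p i = ‖toEucl (H i *ᵥ v)‖ / ∑ j, ‖toEucl (H j *ᵥ v)‖)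
    (hG : ∀ i, G i = ((1 / (n : ℝ)) * ∑ j, ‖toEucl (H j *ᵥ v)‖) / ‖toEucl (H i *ᵥ v)‖)
    (η : ℝ) (hη : 0 < η) :
    (∑ i, p i * ‖toEucl ((1 - η • (G i • H i)) *ᵥ v)‖ ^ 2 =
      v ⬝ᵥ ((1 - η • Hbar) ^ 2 *ᵥ v) +
        η ^ 2 * (((1 / (n : ℝ)) * ∑ i, ‖toEucl (H i *ᵥ v)‖) ^ 2
          - ‖toEucl (Hbar *ᵥ v)‖ ^ 2)) ∧
    (∑ i, p i • (G i • (H i *ᵥ v)) = Hbar *ᵥ v) := by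
  have hn' : (n : ℝ) ≠ 0 := Nat.cast_ne_zero.mpr hn.ne'
  have hnorm : ∀ i, (0:ℝ) < ‖toEucl (H i *ᵥ v)‖ :=
    fun i => norm_pos_iff.mpr (toEucl_ne_zero (hv i))
  have hne : Nonempty (Fin n) := ⟨⟨0, hn⟩⟩
  have hS : (0:ℝ) < ∑ j, ‖toEucl (H j *ᵥ v)‖ :=
    Finset.sum_pos (fun i _ => hnorm i) Finset.univ_nonempty
  set S : ℝ := ∑ j, ‖toEucl (H j *ᵥ v)‖ with hS_def
  set m : ℝ := (1 / (n : ℝ)) * S with hm_def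
  have hpG : ∀ i, p i * G i = 1 / (n : ℝ) := by
    intro i
    rw [hp i, hG i, hm_def]
    field_simp [(hnorm i).ne']
  have hGa : ∀ i, G i * ‖toEucl (H i *ᵥ v)‖ = m := by
    intro i
    rw [hG i]
    exact div_mul_cancel₀ m (hnorm i).ne'
  have hsum_p : ∑ i, p i = 1 := by
    have h1 : ∑ i, p i = (∑ i, ‖toEucl (H i *ᵥ v)‖) / S := by
      rw [Finset.sum_div]
      exact Finset.sum_congr rfl fun i _ => hp i
    rw [h1, ← hS_def, div_self hS.ne']
  have hw : Hbar *ᵥ v = (1 / (n : ℝ)) • ∑ i, H i *ᵥ v := by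
    rw [hHbar, Matrix.smul_mulVec, sum_mulVec']
  -- unbiasedness
  have hmean : ∑ i, p i • (G i • (H i *ᵥ v)) = Hbar *ᵥ v := by
    rw [hw, Finset.smul_sum]
    refine Finset.sum_congr rfl fun i _ => ?_
    rw [smul_smul, hpG i]
  refine ⟨?_, hmean⟩
  -- symmetry of Hbar
  have hHbarSymm : Hbarᵀ = Hbar := by
    rw [hHbar, Matrix.transpose_smul, Matrix.transpose_sum]
    congr 1
    exact Finset.sum_congr rfl fun i _ => hsymm i
  have hvq : v ⬝ᵥ (Hbar *ᵥ v) = (1 / (n : ℝ)) * ∑ i, v ⬝ᵥ (H i *ᵥ v) := by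
    rw [hw, dotProduct_smul, smul_eq_mul, dotProduct_sum']
  -- per-term expansion of the left-hand side
  have hterm : ∀ i, p i * ‖toEucl ((1 - η • (G i • H i)) *ᵥ v)‖ ^ 2
      = p i * (v ⬝ᵥ v + η ^ 2 * m ^ 2) - (2 * η / (n : ℝ)) * (v ⬝ᵥ (H i *ᵥ v)) := by
    intro i
    have hww : (H i *ᵥ v) ⬝ᵥ (H i *ᵥ v) = ‖toEucl (H i *ᵥ v)‖ ^ 2 :=
      (norm_toEucl_sq _).symm
    have hwv : (H i *ᵥ v) ⬝ᵥ v = v ⬝ᵥ (H i *ᵥ v) := dotProduct_comm _ _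
    rw [norm_toEucl_sq]
    simp only [Matrix.sub_mulVec, Matrix.one_mulVec, Matrix.smul_mulVec,
      sub_dotProduct, dotProduct_sub, dotProduct_smul, smul_dotProduct, smul_eq_mul,
      hww, hwv]
    have e1 := hpG i
    have e2 := hGa i
    linear_combination (-2 * η * (v ⬝ᵥ (H i *ᵥ v))) * e1
      + η ^ 2 * p i * (G i * ‖toEucl (H i *ᵥ v)‖ + m) * e2
  -- sum the per-term identity
  have hLHS : ∑ i, p i * ‖toEucl ((1 - η • (G i • H i)) *ᵥ v)‖ ^ 2
      = v ⬝ᵥ v - 2 * η * (v ⬝ᵥ (Hbar *ᵥ v)) + η ^ 2 * m ^ 2 := by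
    calc ∑ i, p i * ‖toEucl ((1 - η • (G i • H i)) *ᵥ v)‖ ^ 2
        = ∑ i, (p i * (v ⬝ᵥ v + η ^ 2 * m ^ 2)
            - (2 * η / (n : ℝ)) * (v ⬝ᵥ (H i *ᵥ v))) :=
          Finset.sum_congr rfl fun i _ => hterm i
      _ = (∑ i, p i) * (v ⬝ᵥ v + η ^ 2 * m ^ 2)
            - (2 * η / (n : ℝ)) * ∑ i, v ⬝ᵥ (H i *ᵥ v) := by
          rw [Finset.sum_sub_distrib, ← Finset.sum_mul, ← Finset.mul_sum]
      _ = v ⬝ᵥ v - 2 * η * (v ⬝ᵥ (Hbar *ᵥ v)) + η ^ 2 * m ^ 2 := by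
          rw [hsum_p, hvq]; ring
  -- expand the right-hand side
  have hsq : (1 - η • Hbar) ^ 2 = 1 - η • Hbar - η • Hbar + (η • Hbar) * (η • Hbar) := by
    rw [sq, mul_sub, mul_one, sub_mul, one_mul]
    abel
  have h1 : v ᵥ* Hbar = Hbar *ᵥ v := by
    conv_lhs => rw [← hHbarSymm]
    exact Matrix.vecMul_transpose Hbar v
  have hvHH : v ⬝ᵥ ((Hbar * Hbar) *ᵥ v) = ‖toEucl (Hbar *ᵥ v)‖ ^ 2 := by
    rw [← Matrix.mulVec_mulVec, dotProduct_mulVec, h1, norm_toEucl_sq]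
  have hRHS : v ⬝ᵥ ((1 - η • Hbar) ^ 2 *ᵥ v)
      = v ⬝ᵥ v - 2 * η * (v ⬝ᵥ (Hbar *ᵥ v)) + η ^ 2 * ‖toEucl (Hbar *ᵥ v)‖ ^ 2 := by
    rw [hsq]
    simp only [Matrix.add_mulVec, Matrix.sub_mulVec, Matrix.one_mulVec,
      smul_mul_assoc, mul_smul_comm, Matrix.smul_mulVec,
      dotProduct_add, dotProduct_sub, dotProduct_smul, smul_eq_mul]
    rw [hvHH]
    ring
  rw [hLHS, hRHS]
  ring
end

section
/- Let (Ω, F, P) be a probability space, let H_0 ⊇ H_1 ⊇ H_2 ⊇ ⋯ be a decreasing sequence of events, let (R_k)_{k≥1} be nonnegative integrable random variables, let ε > 0, and let (b_k)_{k≥2} be nonnegative reals such that E[R_k 1_{H_{k−1}}] ≤ E[R_{k−1} 1_{H_{k−2}}] − ε P(H_{k−2} \ H_{k−1}) + b_k for all k ≥ 2. Then for every k ≥ 2, ∑_{l=2}^{k} P(H_{l−2} \ H_{l−1}) ≤ (1/ε)( E[R_1 1_{H_0}] + ∑_{l=2}^{k} b_l ), and consequently P(H_{k−1}) ≥ P(H_0)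 − (1/ε)( E[R_1 1_{H_0}] + ∑_{l=2}^{∞} b_l ) whenever the series ∑ b_l converges. -/
open MeasureTheory

/-- telescoping bound for the escape probabilities. If
`H 0 ⊇ H 1 ⊇ ⋯` are events, `R k ≥ 0` are integrable, `ε > 0`, `b k ≥ 0`, and
`E[R k 1_{H (k−1)}] ≤ E[R (k−1) 1_{H (k−2)}] − ε P(H (k−2) \ H (k−1)) + b k`
for all `k ≥ 2`, then `∑_{l=2}^k P(H (l−2) \ H (l−1)) ≤
(1/ε)(E[R 1 1_{H 0}] + ∑_{l=2}^k b l)`, and consequently, whenever `∑ b l`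
converges, `P(H (k−1)) ≥ P(H 0) − (1/ε)(E[R 1 1_{H 0}] + ∑_{l=2}^∞ b l)`. -/
theorem telescoping_escape_probability {Ω : Type*} {m0 : MeasurableSpace Ω}
    (μ : Measure Ω) [IsProbabilityMeasure μ]
    (H : ℕ → Set Ω) (hHmeas : ∀ k, MeasurableSet (H k))
    (hHmono : ∀ k, H (k + 1) ⊆ H k)
    (R : ℕ → Ω → ℝ) (hRnn : ∀ k ω, 0 ≤ R k ω)
    (hRint : ∀ k, Integrable (R k) μ)
    (ε : ℝ) (hε : 0 < ε)
    (b : ℕ → ℝ) (hbnn : ∀ k, 0 ≤ b k)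
    (hrec : ∀ k, 2 ≤ k →
      ∫ ω in H (k - 1), R k ω ∂μ ≤
        (∫ ω in H (k - 2), R (k - 1) ω ∂μ) -
          ε * (μ (H (k - 2) \ H (k - 1))).toReal + b k) :
    (∀ k, 2 ≤ k →
      ∑ l ∈ Finset.Icc 2 k, (μ (H (l - 2) \ H (l - 1))).toReal ≤
        (1 / ε) * ((∫ ω in H 0, R 1 ω ∂μ) + ∑ l ∈ Finset.Icc 2 k, b l)) ∧
    ((Summable fun l : ℕ => b (l + 2)) → ∀ k, 1 ≤ k →
      (μ (H (k - 1))).toReal ≥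
        (μ (H 0)).toReal -
          (1 / ε) * ((∫ ω in H 0, R 1 ω ∂μ) + ∑' l : ℕ, b (l + 2))) := by
  set d : ℕ → ℝ := fun l => (μ (H (l - 2) \ H (l - 1))).toReal with hd
  have hInn : ∀ k, 0 ≤ ∫ ω in H k, R (k + 1) ω ∂μ := fun k =>
    setIntegral_nonneg (hHmeas k) (fun ω _ => hRnn _ ω)
  -- key inductive claim
  have key : ∀ k, 2 ≤ k →
      (∫ ω in H (k - 1), R k ω ∂μ) + ε * ∑ l ∈ Finset.Icc 2 k, d l ≤
        (∫ ω in H 0, R 1 ω ∂μ) + ∑ l ∈ Finset.Icc 2 k, b l := by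
    intro k hk
    induction k, hk using Nat.le_induction with
    | base =>
      simp only [Finset.Icc_self, Finset.sum_singleton]
      have h2 := hrec 2 le_rfl
      norm_num at h2 ⊢
      linarith
    | succ k hk ih =>
      have hrecs := hrec (k + 1) (by omega)
      have e1 : k + 1 - 1 = k := by omega
      have e2 : k + 1 - 2 = k - 1 := by omega
      rw [e1, e2] at hrecs
      have ek : k - 1 + 1 = k := by omega
      rw [Finset.sum_Icc_succ_top (by omega : 2 ≤ k + 1),
          Finset.sum_Icc_succ_top (by omega : 2 ≤ k + 1)]
      have hdk1 : d (k + 1) = (μ (H (k - 1) \ H k)).toReal := by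
        simp only [hd, e1, e2]
      rw [e1, hdk1]
      linarith [ih]
  have hI0 : 0 ≤ ∫ ω in H 0, R 1 ω ∂μ := hInn 0
  have part1 : ∀ k, 2 ≤ k →
      ∑ l ∈ Finset.Icc 2 k, d l ≤
        (1 / ε) * ((∫ ω in H 0, R 1 ω ∂μ) + ∑ l ∈ Finset.Icc 2 k, b l) := by
    intro k hk
    have hkey := key k hk
    have hint : 0 ≤ ∫ ω in H (k - 1), R k ω ∂μ := by
      have := hInn (k - 1)
      rwa [show k - 1 + 1 = k by omega] at this
    rw [div_mul_eq_mul_div, le_div_iff₀ hε]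
    nlinarith
  refine ⟨part1, fun hb k hk => ?_⟩
  have hT : 0 ≤ ∑' l : ℕ, b (l + 2) := tsum_nonneg fun l => hbnn _
  rcases eq_or_lt_of_le hk with h1 | h2
  · -- k = 1
    rw [← h1]
    simp only [ge_iff_le, Nat.sub_self]
    have : 0 ≤ (1 / ε) * ((∫ ω in H 0, R 1 ω ∂μ) + ∑' l : ℕ, b (l + 2)) := by
      positivity
    linarith
  · have hk2 : 2 ≤ k := h2
    -- telescoping lower bound
    have tel : ∀ k, 2 ≤ k →
        (μ (H 0)).toReal - (μ (H (k - 1))).toReal ≤ ∑ l ∈ Finset.Icc 2 k, d l := by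
      intro k hk
      induction k, hk using Nat.le_induction with
      | base =>
        simp only [Finset.Icc_self, Finset.sum_singleton]
        have hle : μ (H 0) ≤ μ (H 0 \ H 1) + μ (H 1) :=
          le_trans (measure_mono (Set.subset_diff_union _ _)) (measure_union_le _ _)
        have h1 : (μ (H 0)).toReal ≤ (μ (H 0 \ H 1)).toReal + (μ (H 1)).toReal := by
          rw [← ENNReal.toReal_add (measure_ne_top μ _) (measure_ne_top μ _)]
          exact ENNReal.toReal_mono (by finiteness) hle
        simpa [hd] using by linarith
      | succ k hk ih =>
        rw [Finset.sum_Icc_succ_top (by omega : 2 ≤ k + 1)]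
        have e1 : k + 1 - 1 = k := by omega
        have e2 : k + 1 - 2 = k - 1 := by omega
        have ek : k - 1 + 1 = k := by omega
        have hle : μ (H (k - 1)) ≤ μ (H (k - 1) \ H k) + μ (H k) :=
          le_trans (measure_mono (Set.subset_diff_union _ _)) (measure_union_le _ _)
        have h1 : (μ (H (k - 1))).toReal ≤ (μ (H (k - 1) \ H k)).toReal + (μ (H k)).toReal := by
          rw [← ENNReal.toReal_add (measure_ne_top μ _) (measure_ne_top μ _)]
          exact ENNReal.toReal_mono (by finiteness) hle
        have hdk1 : d (k + 1) = (μ (H (k - 1) \ H k)).toReal := by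
          simp only [hd, e1, e2]
        rw [e1, hdk1]
        linarith
    have hpart := part1 k hk2
    have htel := tel k hk2
    -- partial sum of b ≤ tsum
    have hsum : ∑ l ∈ Finset.Icc 2 k, b l ≤ ∑' l : ℕ, b (l + 2) := by
      have : ∑ l ∈ Finset.Icc 2 k, b l = ∑ i ∈ Finset.range (k - 1), b (i + 2) := by
        rw [show Finset.Icc 2 k = Finset.Ico 2 (k + 1) by rw [Finset.Ico_add_one_right_eq_Icc],
          Finset.sum_Ico_eq_sum_range]
        refine Finset.sum_congr (by congr 1) fun i _ => by rw [add_comm]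
      rw [this]
      exact Summable.sum_le_tsum _ (fun i _ => hbnn _) hb
    have hmul : (1 / ε) * ((∫ ω in H 0, R 1 ω ∂μ) + ∑ l ∈ Finset.Icc 2 k, b l) ≤
        (1 / ε) * ((∫ ω in H 0, R 1 ω ∂μ) + ∑' l : ℕ, b (l + 2)) := by
      apply mul_le_mul_of_nonneg_left (by linarith) (by positivity)
    linarith
end
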